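/- Let C be a 2-copula and let μ_C be the probability measure on [0,1]² induced by C. Then C is I(-1,1) if, and only if, [u - C(u,v)]·[u' - C(u',v')] ≤ [u' - C(u',v)]·[u - C(u,v')] for all u, v, u', v' in [0,1] with u ≤ u' and v ≤ v'. -/

import Mathlib

open MeasureTheory Set

/-- A (bivariate) 2-copula. -/
structure IsCopula2 (C : ℝ → ℝ → ℝ) : Prop where
  grounded_left : ∀ v ∈ Icc (0:ℝ) 1, C 0 v = 0
  grounded_right : ∀ u ∈ Icc (0:ℝ) 1, C u 0 = 0
  margin_left : ∀ u ∈ Icc (0:ℝ) 1, C u 1 = u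
  margin_right : ∀ v ∈ Icc (0:ℝ) 1, C 1 v = v
  twoIncreasing : ∀ u u' v v' : ℝ, u ∈ Icc (0:ℝ) 1 → u' ∈ Icc (0:ℝ) 1 →
    v ∈ Icc (0:ℝ) 1 → v' ∈ Icc (0:ℝ) 1 → u ≤ u' → v ≤ v' →
    0 ≤ C u' v' - C u' v - C u v' + C u v

/-- A joint law `μ` on `ℝ × ℝ` is increasing according to the direction `(a₁, a₂)`
(the I(α) property): the conditional probability
`P[a₁U > x₁, a₂V > x₂ | a₁U > x₁', a₂V > x₂']` is nondecreasing in `(x₁', x₂')`,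
expressed equivalently via the cross-product inequality. -/
def IsIncDir2 (μ : Measure (ℝ × ℝ)) (a₁ a₂ : ℝ) : Prop :=
  ∀ x₁ x₂ x₁' x₂' x₁'' x₂'' : ℝ, x₁' ≤ x₁'' → x₂' ≤ x₂'' →
    μ {p : ℝ × ℝ | (a₁ * p.1 > x₁ ∧ a₂ * p.2 > x₂) ∧ (a₁ * p.1 > x₁' ∧ a₂ * p.2 > x₂')} *
      μ {p : ℝ × ℝ | a₁ * p.1 > x₁'' ∧ a₂ * p.2 > x₂''} ≤
    μ {p : ℝ × ℝ | (a₁ * p.1 > x₁ ∧ a₂ * p.2 > x₂) ∧ (a₁ * p.1 > x₁'' ∧ a₂ * p.2 > x₂'')} *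
      μ {p : ℝ × ℝ | a₁ * p.1 > x₁' ∧ a₂ * p.2 > x₂'}

namespace CopulaProofAux

noncomputable def cl (x : ℝ) : ℝ := max 0 (min 1 x)

lemma cl_mem (x : ℝ) : cl x ∈ Icc (0:ℝ) 1 :=
  ⟨le_max_left _ _, max_le zero_le_one (min_le_left _ _)⟩

lemma cl_mono {x y : ℝ} (h : x ≤ y) : cl x ≤ cl y :=
  max_le_max le_rfl (min_le_min le_rfl h)

lemma cl_of_mem {x : ℝ} (hx : x ∈ Icc (0:ℝ) 1) : cl x = x := by
  simp only [cl]
  rw [min_eq_right hx.2, max_eq_right hx.1]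

variable {C : ℝ → ℝ → ℝ}

lemma zero_mem : (0:ℝ) ∈ Icc (0:ℝ) 1 := ⟨le_rfl, zero_le_one⟩
lemma one_mem : (1:ℝ) ∈ Icc (0:ℝ) 1 := ⟨zero_le_one, le_rfl⟩

lemma cop_nonneg (hC : IsCopula2 C) {u v : ℝ} (hu : u ∈ Icc (0:ℝ) 1)
    (hv : v ∈ Icc (0:ℝ) 1) : 0 ≤ C u v := by
  have h := hC.twoIncreasing 0 u 0 v zero_mem hu zero_mem hv hu.1 hv.1
  have h1 := hC.grounded_right u hu
  have h2 := hC.grounded_left v hv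
  have h3 := hC.grounded_right 0 zero_mem
  linarith

lemma cop_le (hC : IsCopula2 C) {u v : ℝ} (hu : u ∈ Icc (0:ℝ) 1)
    (hv : v ∈ Icc (0:ℝ) 1) : C u v ≤ u := by
  have h := hC.twoIncreasing 0 u v 1 zero_mem hu hv one_mem hu.1 hv.2
  have h1 := hC.margin_left u hu
  have h2 := hC.grounded_left 1 one_mem
  have h3 := hC.grounded_left v hv
  linarith

lemma cop_mono1 (hC : IsCopula2 C) {u u' v : ℝ} (hu : u ∈ Icc (0:ℝ) 1)
    (hu' : u' ∈ Icc (0:ℝ) 1) (hv : v ∈ Icc (0:ℝ) 1) (h : u ≤ u') :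
    u - C u v ≤ u' - C u' v := by
  have h0 := hC.twoIncreasing u u' v 1 hu hu' hv one_mem h hv.2
  have h1 := hC.margin_left u hu
  have h2 := hC.margin_left u' hu'
  linarith

lemma cop_mono2 (hC : IsCopula2 C) {u v v' : ℝ} (hu : u ∈ Icc (0:ℝ) 1)
    (hv : v ∈ Icc (0:ℝ) 1) (hv' : v' ∈ Icc (0:ℝ) 1) (h : v ≤ v') :
    C u v ≤ C u v' := by
  have h0 := hC.twoIncreasing 0 u v v' zero_mem hu hv hv' hu.1 h
  have h1 := hC.grounded_left v hv
  have h2 := hC.grounded_left v' hv'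
  linarith

/-- The survival-type function `G a b = P[U < a, V > b]` expressed through the copula,
with arguments clamped to `[0,1]`. -/
noncomputable def Gf (C : ℝ → ℝ → ℝ) (a b : ℝ) : ℝ := cl a - C (cl a) (cl b)

lemma Gf_nonneg (hC : IsCopula2 C) (a b : ℝ) : 0 ≤ Gf C a b := by
  have := cop_le hC (cl_mem a) (cl_mem b)
  simp only [Gf]; linarith

lemma Gf_mono1 (hC : IsCopula2 C) (b : ℝ) {a a' : ℝ} (h : a ≤ a') :
    Gf C a b ≤ Gf C a' b :=
  cop_mono1 hC (cl_mem a) (cl_mem a') (cl_mem b) (cl_mono h)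

lemma Gf_anti2 (hC : IsCopula2 C) (a : ℝ) {b b' : ℝ} (h : b ≤ b') :
    Gf C a b' ≤ Gf C a b := by
  have := cop_mono2 hC (cl_mem a) (cl_mem b) (cl_mem b') (cl_mono h)
  simp only [Gf]; linarith

/-- The combinatorial core: an RR₂ function which is nondecreasing in the first
argument and nonincreasing in the second satisfies the four-point inequality. -/
lemma key (G : ℝ → ℝ → ℝ) (hnn : ∀ a b, 0 ≤ G a b)
    (hm1 : ∀ (b : ℝ) {a a' : ℝ}, a ≤ a' → G a b ≤ G a' b)
    (hm2 : ∀ (a : ℝ) {b b' : ℝ}, b ≤ b' → G a b' ≤ G a b)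
    (hrr : ∀ {a a' b b' : ℝ}, a ≤ a' → b ≤ b' → G a b * G a' b' ≤ G a' b * G a b')
    {a b a' b' a'' b'' : ℝ} (h1 : a'' ≤ a') (h2 : b' ≤ b'') :
    G (min a a') (max b b') * G a'' b'' ≤ G (min a a'') (max b b'') * G a' b' := by
  rcases le_total a a'' with h3 | h3
  · have ha' : a ≤ a' := le_trans h3 h1
    rw [min_eq_left ha', min_eq_left h3]
    rcases le_total b b' with h5 | h5
    · have h6 : b ≤ b'' := le_trans h5 h2
      rw [max_eq_right h5, max_eq_right h6]
      have e1 := hrr h3 h2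
      have e2 := hm1 b' h1
      nlinarith [hnn a b'']
    · rw [max_eq_left h5]
      rcases le_total b b'' with h6 | h6
      · rw [max_eq_right h6]
        have e1 := hrr h3 h6
        have e2 := hm1 b h1
        have e3 := hm2 a' h5
        nlinarith [hnn a b'']
      · rw [max_eq_left h6]
        have e1 := hm1 b'' h1
        have e2 := hm2 a' h2
        nlinarith [hnn a b]
  · rw [min_eq_right h3]
    rcases le_total a a' with h4 | h4
    · rw [min_eq_left h4]
      rcases le_total b b' with h5 | h5
      · have h6 : b ≤ b'' := le_trans h5 h2
        rw [max_eq_right h5, max_eq_right h6]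
        have e1 := hm1 b' h4
        nlinarith [hnn a'' b'']
      · rw [max_eq_left h5]
        rcases le_total b b'' with h6 | h6
        · rw [max_eq_right h6]
          have e1 := hm1 b h4
          have e2 := hm2 a' h5
          nlinarith [hnn a'' b'']
        · rw [max_eq_left h6]
          have e1 := hrr h3 h6
          have e2 := hm1 b'' h4
          have e3 := hm2 a' h2
          nlinarith [hnn a'' b]
    · rw [min_eq_right h4]
      rcases le_total b b' with h5 | h5
      · have h6 : b ≤ b'' := le_trans h5 h2
        rw [max_eq_right h5, max_eq_right h6]
        exact (mul_comm _ _).le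
      · rw [max_eq_left h5]
        rcases le_total b b'' with h6 | h6
        · rw [max_eq_right h6]
          have e1 := hm2 a' h5
          nlinarith [hnn a'' b'']
        · rw [max_eq_left h6]
          have e1 := hrr h1 h6
          have e2 := hm2 a' h2
          nlinarith [hnn a'' b]

section Measure

variable (μ : Measure (ℝ × ℝ)) [IsProbabilityMeasure μ]

lemma compl_null (hsupp : μ (Icc (0:ℝ) 1 ×ˢ Icc (0:ℝ) 1) = 1) :
    μ ((Icc (0:ℝ) 1 ×ˢ Icc (0:ℝ) 1)ᶜ) = 0 := by
  have hm : MeasurableSet (Icc (0:ℝ) 1 ×ˢ Icc (0:ℝ) 1) :=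
    measurableSet_Icc.prod measurableSet_Icc
  rw [measure_compl hm (measure_ne_top μ _), hsupp, measure_univ, tsub_self]

variable (hC : IsCopula2 C)
variable (hsupp : μ (Icc (0:ℝ) 1 ×ˢ Icc (0:ℝ) 1) = 1)
variable (hμC : ∀ u ∈ Icc (0:ℝ) 1, ∀ v ∈ Icc (0:ℝ) 1,
      μ (Icc 0 u ×ˢ Icc 0 v) = ENNReal.ofReal (C u v))

include hC hsupp hμC

lemma vline_null (t : ℝ) : μ {p : ℝ × ℝ | p.1 = t} = 0 := by
  rw [← measure_inter_conull (compl_null μ hsupp)]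
  by_cases ht : t ∈ Icc (0:ℝ) 1
  · have key0 : μ (Icc t t ×ˢ Icc (0:ℝ) 1) = 0 := by
      rcases eq_or_lt_of_le ht.1 with h0 | h0
      · have := hμC 0 zero_mem 1 one_mem
        rw [hC.grounded_left 1 one_mem, ENNReal.ofReal_zero] at this
        rw [← h0]
        exact this
      · refine le_antisymm (ENNReal.le_of_forall_pos_le_add fun ε hε _ => ?_) zero_le
        rw [zero_add]
        set δ : ℝ := min (ε : ℝ) t with hδdef
        have hδpos : 0 < δ := lt_min (by exact_mod_cast hε) h0
        have hδt : δ ≤ t := min_le_right _ _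
        have htt : t - δ ∈ Icc (0:ℝ) 1 := ⟨by linarith, by linarith [ht.2]⟩
        have hdisj : Disjoint (Icc (0:ℝ) (t - δ) ×ˢ Icc (0:ℝ) 1) (Icc t t ×ˢ Icc (0:ℝ) 1) := by
          rw [Set.disjoint_left]
          rintro p ⟨hp1, _⟩ ⟨hq1, _⟩
          simp only [mem_Icc] at hp1 hq1
          linarith [hp1.2, hq1.1]
        have hmeas : MeasurableSet (Icc t t ×ˢ Icc (0:ℝ) 1) :=
          measurableSet_Icc.prod measurableSet_Icc
        have hunion := measure_union (μ := μ) hdisj hmeas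
        have hsub : (Icc (0:ℝ) (t - δ) ×ˢ Icc (0:ℝ) 1) ∪ (Icc t t ×ˢ Icc (0:ℝ) 1)
            ⊆ Icc (0:ℝ) t ×ˢ Icc (0:ℝ) 1 := by
          apply Set.union_subset
          · exact Set.prod_mono (Icc_subset_Icc le_rfl (by linarith)) subset_rfl
          · exact Set.prod_mono (Icc_subset_Icc ht.1 le_rfl) subset_rfl
        have h1 := hμC (t - δ) htt 1 one_mem
        rw [hC.margin_left _ htt] at h1
        have h2 := hμC t ht 1 one_mem
        rw [hC.margin_left _ ht] at h2
        have hle : ENNReal.ofReal (t - δ) + μ (Icc t t ×ˢ Icc (0:ℝ) 1)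
            ≤ ENNReal.ofReal t := by
          rw [← h1, ← h2, ← hunion]
          exact measure_mono hsub
        have := ENNReal.le_sub_of_add_le_left ENNReal.ofReal_ne_top hle
        calc μ (Icc t t ×ˢ Icc (0:ℝ) 1) ≤ ENNReal.ofReal t - ENNReal.ofReal (t - δ) := this
          _ = ENNReal.ofReal (t - (t - δ)) := by
              rw [ENNReal.ofReal_sub _ (by linarith : (0:ℝ) ≤ t - δ)]
          _ = ENNReal.ofReal δ := by ring_nf
          _ ≤ (ε : ENNReal) := by
              rw [← ENNReal.ofReal_coe_nnreal]
              exact ENNReal.ofReal_le_ofReal (min_le_left _ _)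
    refine measure_mono_null ?_ key0
    rintro p ⟨hp1, hp2⟩
    simp only [mem_setOf_eq] at hp1
    rw [Set.mem_prod] at hp2 ⊢
    exact ⟨by rw [mem_Icc, hp1]; exact ⟨le_rfl, le_rfl⟩, hp2.2⟩
  · refine measure_mono_null ?_ (measure_empty (μ := μ))
    rintro p ⟨hp1, hp2⟩
    simp only [mem_setOf_eq] at hp1
    rw [Set.mem_prod] at hp2
    exact absurd (hp1 ▸ hp2.1) ht

lemma hline_null (t : ℝ) : μ {p : ℝ × ℝ | p.2 = t} = 0 := by
  rw [← measure_inter_conull (compl_null μ hsupp)]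
  by_cases ht : t ∈ Icc (0:ℝ) 1
  · have key0 : μ (Icc (0:ℝ) 1 ×ˢ Icc t t) = 0 := by
      rcases eq_or_lt_of_le ht.1 with h0 | h0
      · have := hμC 1 one_mem 0 zero_mem
        rw [hC.grounded_right 1 one_mem, ENNReal.ofReal_zero] at this
        rw [← h0]
        exact this
      · refine le_antisymm (ENNReal.le_of_forall_pos_le_add fun ε hε _ => ?_) zero_le
        rw [zero_add]
        set δ : ℝ := min (ε : ℝ) t with hδdef
        have hδpos : 0 < δ := lt_min (by exact_mod_cast hε) h0
        have hδt : δ ≤ t := min_le_right _ _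
        have htt : t - δ ∈ Icc (0:ℝ) 1 := ⟨by linarith, by linarith [ht.2]⟩
        have hdisj : Disjoint (Icc (0:ℝ) 1 ×ˢ Icc (0:ℝ) (t - δ)) (Icc (0:ℝ) 1 ×ˢ Icc t t) := by
          rw [Set.disjoint_left]
          rintro p ⟨_, hp2⟩ ⟨_, hq2⟩
          simp only [mem_Icc] at hp2 hq2
          linarith [hp2.2, hq2.1]
        have hmeas : MeasurableSet (Icc (0:ℝ) 1 ×ˢ Icc t t) :=
          measurableSet_Icc.prod measurableSet_Icc
        have hunion := measure_union (μ := μ) hdisj hmeas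
        have hsub : (Icc (0:ℝ) 1 ×ˢ Icc (0:ℝ) (t - δ)) ∪ (Icc (0:ℝ) 1 ×ˢ Icc t t)
            ⊆ Icc (0:ℝ) 1 ×ˢ Icc (0:ℝ) t := by
          apply Set.union_subset
          · exact Set.prod_mono subset_rfl (Icc_subset_Icc le_rfl (by linarith))
          · exact Set.prod_mono subset_rfl (Icc_subset_Icc ht.1 le_rfl)
        have h1 := hμC 1 one_mem (t - δ) htt
        rw [hC.margin_right _ htt] at h1
        have h2 := hμC 1 one_mem t ht
        rw [hC.margin_right _ ht] at h2
        have hle : ENNReal.ofReal (t - δ) + μ (Icc (0:ℝ) 1 ×ˢ Icc t t)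
            ≤ ENNReal.ofReal t := by
          rw [← h1, ← h2, ← hunion]
          exact measure_mono hsub
        have := ENNReal.le_sub_of_add_le_left ENNReal.ofReal_ne_top hle
        calc μ (Icc (0:ℝ) 1 ×ˢ Icc t t) ≤ ENNReal.ofReal t - ENNReal.ofReal (t - δ) := this
          _ = ENNReal.ofReal (t - (t - δ)) := by
              rw [ENNReal.ofReal_sub _ (by linarith : (0:ℝ) ≤ t - δ)]
          _ = ENNReal.ofReal δ := by ring_nf
          _ ≤ (ε : ENNReal) := by
              rw [← ENNReal.ofReal_coe_nnreal]
              exact ENNReal.ofReal_le_ofReal (min_le_left _ _)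
    refine measure_mono_null ?_ key0
    rintro p ⟨hp1, hp2⟩
    simp only [mem_setOf_eq] at hp1
    rw [Set.mem_prod] at hp2 ⊢
    exact ⟨hp2.1, by rw [mem_Icc, hp1]; exact ⟨le_rfl, le_rfl⟩⟩
  · refine measure_mono_null ?_ (measure_empty (μ := μ))
    rintro p ⟨hp1, hp2⟩
    simp only [mem_setOf_eq] at hp1
    rw [Set.mem_prod] at hp2
    exact absurd (hp1 ▸ hp2.2) ht

lemma meas_event (a b : ℝ) :
    μ {p : ℝ × ℝ | p.1 < a ∧ b < p.2} = ENNReal.ofReal (Gf C a b) := by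
  set u : ℝ := cl a with hu_def
  set v : ℝ := cl b with hv_def
  have hu : u ∈ Icc (0:ℝ) 1 := cl_mem a
  have hv : v ∈ Icc (0:ℝ) 1 := cl_mem b
  set S : Set (ℝ × ℝ) := Icc (0:ℝ) 1 ×ˢ Icc (0:ℝ) 1 with hS_def
  set E : Set (ℝ × ℝ) := {p : ℝ × ℝ | p.1 < a ∧ b < p.2} with hE_def
  set R : Set (ℝ × ℝ) := Icc (0:ℝ) u ×ˢ Icc v 1 with hR_def
  set N : Set (ℝ × ℝ) := {p : ℝ × ℝ | p.1 = u} ∪ {p : ℝ × ℝ | p.2 = v} with hN_def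
  have hN : μ N = 0 :=
    measure_union_null (vline_null μ hC hsupp hμC u) (hline_null μ hC hsupp hμC v)
  have hES : μ E = μ (E ∩ S) := (measure_inter_conull (compl_null μ hsupp)).symm
  have hsub1 : E ∩ S ⊆ R := by
    rintro p ⟨⟨h1, h2⟩, hpS⟩
    rw [Set.mem_prod] at hpS
    rw [hR_def, Set.mem_prod, mem_Icc, mem_Icc]
    refine ⟨⟨hpS.1.1, ?_⟩, ?_, hpS.2.2⟩
    · exact le_trans (le_min hpS.1.2 h1.le) (le_max_right _ _)
    · exact max_le hpS.2.1 (le_trans (min_le_right 1 b) h2.le)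
  have hsub2 : R ⊆ (E ∩ S) ∪ N := by
    intro p hp
    rw [hR_def, Set.mem_prod, mem_Icc, mem_Icc] at hp
    by_cases hp1 : p.1 = u
    · exact Or.inr (Or.inl hp1)
    by_cases hp2 : p.2 = v
    · exact Or.inr (Or.inr hp2)
    left
    have hlt1 : p.1 < u := lt_of_le_of_ne hp.1.2 hp1
    have hlt2 : v < p.2 := lt_of_le_of_ne hp.2.1 (Ne.symm hp2)
    constructor
    · constructor
      · -- p.1 < a
        rcases le_total (min 1 a) 0 with hm | hm
        · exfalso
          have : u = 0 := max_eq_left hm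
          linarith [hp.1.1, this ▸ hlt1]
        · have hue : u = min 1 a := max_eq_right hm
          calc p.1 < u := hlt1
            _ = min 1 a := hue
            _ ≤ a := min_le_right _ _
      · -- b < p.2
        rcases le_total b 1 with hm | hm
        · have : b ≤ v := le_trans (by rw [min_eq_right hm]) (le_max_right _ _)
          linarith
        · exfalso
          have hv1 : v = 1 := by
            rw [hv_def]; simp only [cl]
            rw [min_eq_left hm, max_eq_right zero_le_one]
          have := hp.2.2
          rw [hv1] at hlt2
          linarith
    · rw [Set.mem_prod, mem_Icc, mem_Icc]
      exact ⟨⟨hp.1.1, le_trans hp.1.2 hu.2⟩, ⟨le_trans hv.1 hp.2.1, hp.2.2⟩⟩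
  have hER : μ (E ∩ S) = μ R := by
    refine le_antisymm (measure_mono hsub1) ?_
    calc μ R ≤ μ ((E ∩ S) ∪ N) := measure_mono hsub2
      _ ≤ μ (E ∩ S) + μ N := measure_union_le _ _
      _ = μ (E ∩ S) := by rw [hN, add_zero]
  have hRval : μ R = ENNReal.ofReal (u - C u v) := by
    have hmeasR : MeasurableSet R := measurableSet_Icc.prod measurableSet_Icc
    have hAB := measure_union_add_inter (μ := μ) (Icc (0:ℝ) u ×ˢ Icc (0:ℝ) v) hmeasR
    have hAunion : (Icc (0:ℝ) u ×ˢ Icc (0:ℝ) v) ∪ R = Icc (0:ℝ) u ×ˢ Icc (0:ℝ) 1 := by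
      rw [hR_def, ← Set.prod_union, Icc_union_Icc_eq_Icc hv.1 hv.2]
    have hAinter0 : μ ((Icc (0:ℝ) u ×ˢ Icc (0:ℝ) v) ∩ R) = 0 := by
      refine measure_mono_null ?_ (hline_null μ hC hsupp hμC v)
      rintro p ⟨⟨_, hp2⟩, hq⟩
      rw [hR_def, Set.mem_prod] at hq
      simp only [mem_setOf_eq]
      exact le_antisymm (by rw [mem_Icc] at hp2; exact hp2.2) hq.2.1
    rw [hAunion, hAinter0, add_zero] at hAB
    have h1 := hμC u hu 1 one_mem
    rw [hC.margin_left u hu] at h1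
    have h2 := hμC u hu v hv
    rw [h1, h2] at hAB
    have hsplit : ENNReal.ofReal u = ENNReal.ofReal (C u v) + ENNReal.ofReal (u - C u v) := by
      rw [← ENNReal.ofReal_add (cop_nonneg hC hu hv) (by linarith [cop_le hC hu hv])]
      ring_nf
    rw [hsplit] at hAB
    exact ((ENNReal.add_right_inj ENNReal.ofReal_ne_top).mp hAB).symm
  rw [hES, hER, hRval]
  rfl

end Measure

end CopulaProofAux

open CopulaProofAux in
theorem copula_I_neg1_1_iff (C : ℝ → ℝ → ℝ) (hC : IsCopula2 C)
    (μ : Measure (ℝ × ℝ)) [IsProbabilityMeasure μ]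
    (hsupp : μ (Icc (0:ℝ) 1 ×ˢ Icc (0:ℝ) 1) = 1)
    (hμC : ∀ u ∈ Icc (0:ℝ) 1, ∀ v ∈ Icc (0:ℝ) 1,
      μ (Icc 0 u ×ˢ Icc 0 v) = ENNReal.ofReal (C u v)) :
    IsIncDir2 μ (-1) 1 ↔
      ∀ u ∈ Icc (0:ℝ) 1, ∀ v ∈ Icc (0:ℝ) 1, ∀ u' ∈ Icc (0:ℝ) 1, ∀ v' ∈ Icc (0:ℝ) 1,
        u ≤ u' → v ≤ v' →
        (u - C u v) * (u' - C u' v') ≤ (u' - C u' v) * (u - C u v') := by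
  have me := meas_event μ hC hsupp hμC
  constructor
  · intro h u hu v hv u' hu' v' hv' huu hvv
    have h4 := h (-u) v (-u') v (-u') v' le_rfl hvv
    have s1 : {p : ℝ × ℝ | ((-1:ℝ) * p.1 > -u ∧ (1:ℝ) * p.2 > v) ∧
        ((-1:ℝ) * p.1 > -u' ∧ (1:ℝ) * p.2 > v)} = {p : ℝ × ℝ | p.1 < u ∧ v < p.2} := by
      ext p
      simp only [mem_setOf_eq, neg_mul, one_mul, gt_iff_lt]
      constructor
      · rintro ⟨⟨ha, hb⟩, _⟩; exact ⟨by linarith, hb⟩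
      · rintro ⟨ha, hb⟩; exact ⟨⟨by linarith, hb⟩, by linarith, hb⟩
    have s2 : {p : ℝ × ℝ | (-1:ℝ) * p.1 > -u' ∧ (1:ℝ) * p.2 > v'} =
        {p : ℝ × ℝ | p.1 < u' ∧ v' < p.2} := by
      ext p
      simp only [mem_setOf_eq, neg_mul, one_mul, gt_iff_lt]
      constructor
      · rintro ⟨ha, hb⟩; exact ⟨by linarith, hb⟩
      · rintro ⟨ha, hb⟩; exact ⟨by linarith, hb⟩
    have s3 : {p : ℝ × ℝ | ((-1:ℝ) * p.1 > -u ∧ (1:ℝ) * p.2 > v) ∧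
        ((-1:ℝ) * p.1 > -u' ∧ (1:ℝ) * p.2 > v')} = {p : ℝ × ℝ | p.1 < u ∧ v' < p.2} := by
      ext p
      simp only [mem_setOf_eq, neg_mul, one_mul, gt_iff_lt]
      constructor
      · rintro ⟨⟨ha, hb⟩, ⟨hc, hd⟩⟩; exact ⟨by linarith, hd⟩
      · rintro ⟨ha, hb⟩; exact ⟨⟨by linarith, by linarith⟩, by linarith, hb⟩
    have s4 : {p : ℝ × ℝ | (-1:ℝ) * p.1 > -u' ∧ (1:ℝ) * p.2 > v} =
        {p : ℝ × ℝ | p.1 < u' ∧ v < p.2} := by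
      ext p
      simp only [mem_setOf_eq, neg_mul, one_mul, gt_iff_lt]
      constructor
      · rintro ⟨ha, hb⟩; exact ⟨by linarith, hb⟩
      · rintro ⟨ha, hb⟩; exact ⟨by linarith, hb⟩
    rw [s1, s2, s3, s4, me u v, me u' v', me u v', me u' v] at h4
    have eGuv : Gf C u v = u - C u v := by
      simp only [Gf, cl_of_mem hu, cl_of_mem hv]
    have eGu'v' : Gf C u' v' = u' - C u' v' := by
      simp only [Gf, cl_of_mem hu', cl_of_mem hv']
    have eGuv' : Gf C u v' = u - C u v' := by
      simp only [Gf, cl_of_mem hu, cl_of_mem hv']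
    have eGu'v : Gf C u' v = u' - C u' v := by
      simp only [Gf, cl_of_mem hu', cl_of_mem hv]
    rw [eGuv, eGu'v', eGuv', eGu'v,
      ← ENNReal.ofReal_mul (by linarith [cop_le hC hu hv]),
      ← ENNReal.ofReal_mul (by linarith [cop_le hC hu hv'])] at h4
    have hrhs : (0:ℝ) ≤ (u - C u v') * (u' - C u' v) :=
      mul_nonneg (by linarith [cop_le hC hu hv']) (by linarith [cop_le hC hu' hv])
    have := (ENNReal.ofReal_le_ofReal_iff hrhs).mp h4
    linarith [mul_comm (u - C u v') (u' - C u' v)]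
  · intro h
    intro x₁ x₂ x₁' x₂' x₁'' x₂'' h1 h2
    have s1 : {p : ℝ × ℝ | ((-1:ℝ) * p.1 > x₁ ∧ (1:ℝ) * p.2 > x₂) ∧
        ((-1:ℝ) * p.1 > x₁' ∧ (1:ℝ) * p.2 > x₂')} =
        {p : ℝ × ℝ | p.1 < min (-x₁) (-x₁') ∧ max x₂ x₂' < p.2} := by
      ext p
      simp only [mem_setOf_eq, neg_mul, one_mul, gt_iff_lt, lt_min_iff, max_lt_iff]
      constructor
      · rintro ⟨⟨ha, hb⟩, hc, hd⟩; exact ⟨⟨by linarith, by linarith⟩, hb, hd⟩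
      · rintro ⟨⟨ha, hb⟩, hc, hd⟩; exact ⟨⟨by linarith, hc⟩, by linarith, hd⟩
    have s2 : {p : ℝ × ℝ | (-1:ℝ) * p.1 > x₁'' ∧ (1:ℝ) * p.2 > x₂''} =
        {p : ℝ × ℝ | p.1 < -x₁'' ∧ x₂'' < p.2} := by
      ext p
      simp only [mem_setOf_eq, neg_mul, one_mul, gt_iff_lt]
      constructor
      · rintro ⟨ha, hb⟩; exact ⟨by linarith, hb⟩
      · rintro ⟨ha, hb⟩; exact ⟨by linarith, hb⟩
    have s3 : {p : ℝ × ℝ | ((-1:ℝ) * p.1 > x₁ ∧ (1:ℝ) * p.2 > x₂) ∧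
        ((-1:ℝ) * p.1 > x₁'' ∧ (1:ℝ) * p.2 > x₂'')} =
        {p : ℝ × ℝ | p.1 < min (-x₁) (-x₁'') ∧ max x₂ x₂'' < p.2} := by
      ext p
      simp only [mem_setOf_eq, neg_mul, one_mul, gt_iff_lt, lt_min_iff, max_lt_iff]
      constructor
      · rintro ⟨⟨ha, hb⟩, hc, hd⟩; exact ⟨⟨by linarith, by linarith⟩, hb, hd⟩
      · rintro ⟨⟨ha, hb⟩, hc, hd⟩; exact ⟨⟨by linarith, hc⟩, by linarith, hd⟩
    have s4 : {p : ℝ × ℝ | (-1:ℝ) * p.1 > x₁' ∧ (1:ℝ) * p.2 > x₂'} =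
        {p : ℝ × ℝ | p.1 < -x₁' ∧ x₂' < p.2} := by
      ext p
      simp only [mem_setOf_eq, neg_mul, one_mul, gt_iff_lt]
      constructor
      · rintro ⟨ha, hb⟩; exact ⟨by linarith, hb⟩
      · rintro ⟨ha, hb⟩; exact ⟨by linarith, hb⟩
    rw [s1, s2, s3, s4, me _ _, me _ _, me _ _, me _ _,
      ← ENNReal.ofReal_mul (Gf_nonneg hC _ _), ← ENNReal.ofReal_mul (Gf_nonneg hC _ _)]
    apply ENNReal.ofReal_le_ofReal
    have hrr : ∀ {p p' q q' : ℝ}, p ≤ p' → q ≤ q' →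
        Gf C p q * Gf C p' q' ≤ Gf C p' q * Gf C p q' := by
      intro p p' q q' hp hq
      exact h (cl p) (cl_mem p) (cl q) (cl_mem q) (cl p') (cl_mem p') (cl q') (cl_mem q')
        (cl_mono hp) (cl_mono hq)
    exact key (Gf C) (Gf_nonneg hC) (Gf_mono1 hC) (Gf_anti2 hC) hrr (by linarith) h2
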